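/- Let X ∈ Ω, δ = dist(·,∂Ω), and let φ be a Lipschitz function supported in 8B_X = B(X, 4δ(X)) with |∇φ(Z)| ≤ C₁/δ(X) + C₁ 2^i · 1_{2^{−i−1} ≤ δ(Z) ≤ 2^{−i}}(Z) for a.e. Z. Then for every y ∈ ∂Ω, ∫_{{Z : |Z−y| ≤ 8δ(Z)}} δ(Z)^{2−n} |∇φ(Z)|² dZ ≤ C, where C depends only on n and C₁ (not on X, i, or y). -/

import Mathlib

open Metric MeasureTheory
open scoped ENNReal

lemma aux_pow_split (u : ℝ) (hu : 0 < u) (n : ℕ) :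
    u ^ ((2:ℝ) - n) = u ^ 2 / u ^ n := by
  rw [Real.rpow_sub hu, Real.rpow_two, Real.rpow_natCast]

lemma aux1 (n k : ℕ) (C₁ dX : ℝ) (hC₁ : 0 < C₁) (hdX : 0 < dX) :
    2*(C₁/dX)^2 * ((8*dX)/2^(k+1)) ^ ((2:ℝ) - n) * (8*((8*dX)/2^k))^n
      ≤ 32*C₁^2*16^n*(1/2)^k := by
  have hu : (0:ℝ) < (8*dX)/2^(k+1) := by positivity
  have h8 : 8*((8*dX)/2^k) = 16*((8*dX)/2^(k+1)) := by
    rw [pow_succ]; field_simp; ring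
  rw [aux_pow_split _ hu, h8]
  set u := (8*dX)/2^(k+1) with hu_def
  rw [mul_pow 16 u n]
  have hun : (0:ℝ) < u ^ n := by positivity
  have key : 2*(C₁/dX)^2 * (u^2/u^n) * ((16:ℝ)^n * u^n)
      = 2*16^n*((C₁/dX)*u)^2 := by
    field_simp
  rw [key]
  have hau : (C₁/dX)*u = 4*C₁*(1/2)^k := by
    rw [hu_def, pow_succ, one_div, inv_pow]; field_simp; ring
  rw [hau]
  have h1 : (0:ℝ) < (1/2:ℝ)^k := by positivity
  have h2 : ((1/2:ℝ))^k ≤ 1 := by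
    apply pow_le_one₀ <;> norm_num
  have hxx : ((1/2:ℝ))^k * ((1/2:ℝ))^k ≤ ((1/2:ℝ))^k := by nlinarith
  have h3 : (0:ℝ) < (16:ℝ)^n := by positivity
  have hmain := mul_le_mul_of_nonneg_left hxx
    (show (0:ℝ) ≤ 32*16^n*C₁^2 by positivity)
  nlinarith [hmain]

lemma aux2 (n : ℕ) (C₁ : ℝ) (i : ℕ) (hC₁ : 0 < C₁) :
    2*(C₁*2^i)^2 * ((2:ℝ)^(-(i:ℤ)-1)) ^ ((2:ℝ)-n) * (8*(2:ℝ)^(-(i:ℤ)))^n ≤ C₁^2*16^n := by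
  have ht : (0:ℝ) < (2:ℝ)^(-(i:ℤ)-1) := by positivity
  set t := (2:ℝ)^(-(i:ℤ)-1) with ht_def
  have h8 : 8*(2:ℝ)^(-(i:ℤ)) = 16*t := by
    rw [ht_def, show (-(i:ℤ)) = 1 + (-(i:ℤ)-1) by ring, zpow_add₀ (by norm_num : (2:ℝ) ≠ 0)]
    ring_nf
  rw [aux_pow_split _ ht, h8, mul_pow 16 t n]
  have hit : (2:ℝ)^i * t = 1/2 := by
    rw [ht_def, ← zpow_natCast (2:ℝ) i, ← zpow_add₀ (by norm_num : (2:ℝ) ≠ 0),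
      show (i:ℤ) + (-(i:ℤ)-1) = -1 by ring, zpow_neg_one]
    norm_num
  have hun : (0:ℝ) < t ^ n := by positivity
  have key : 2*(C₁*2^i)^2 * (t^2/t^n) * ((16:ℝ)^n * t^n) = 2*16^n*(C₁*((2:ℝ)^i*t))^2 := by
    field_simp
  rw [key, hit]
  have h3 : (0:ℝ) < (16:ℝ)^n := by positivity
  nlinarith [sq_nonneg C₁]

lemma aux_dyadic (R d : ℝ) (hd : 0 < d) (hdR : d ≤ R) :
    ∃ k : ℕ, R/2^(k+1) < d ∧ d ≤ R/2^k := by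
  obtain ⟨m, hm⟩ := pow_unbounded_of_one_lt (R/d) (one_lt_two (α := ℝ))
  have hPm : R/2^(m+1) < d := by
    rw [div_lt_iff₀ (by positivity)]
    have h1 : R < d * 2^m := by
      rw [div_lt_iff₀ hd] at hm; linarith [hm]
    have h2 : d * 2^m ≤ d * 2^(m+1) := by
      apply mul_le_mul_of_nonneg_left _ hd.le
      apply pow_le_pow_right₀ (by norm_num) (by omega)
    linarith
  have hP : ∃ k, R/2^(k+1) < d := ⟨m, hPm⟩
  refine ⟨Nat.find hP, Nat.find_spec hP, ?_⟩
  rcases Nat.eq_zero_or_pos (Nat.find hP) with h0 | hpos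
  · rw [h0]; simpa using hdR
  · have hlt := Nat.find_min hP (Nat.sub_lt hpos one_pos)
    push_neg at hlt
    have he : Nat.find hP - 1 + 1 = Nat.find hP := by omega
    rwa [he] at hlt

/-- Uniform bound on the non-tangential cone integral of `δ^{2−n} |∇φ|²` for a
Lipschitz cutoff `φ` supported in `8B_X = B(X, 4δ(X))` whose gradient satisfies
`|∇φ(Z)| ≤ C₁/δ(X) + C₁ 2^i 1_{2^{−i−1} ≤ δ(Z) ≤ 2^{−i}}(Z)` a.e.; the bound `C`
depends only on `n` and `C₁`. -/
theorem cone_integral_cutoff_bound (n : ℕ) (hn : 2 ≤ n) (C₁ : ℝ) (hC₁ : 0 < C₁) :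
    ∃ C : ℝ, 0 < C ∧
      ∀ (Ω : Set (EuclideanSpace ℝ (Fin n))), IsOpen Ω → (frontier Ω).Nonempty →
      ∀ X ∈ Ω, ∀ i : ℕ, ∀ (φ : EuclideanSpace ℝ (Fin n) → ℝ) (K : NNReal),
        LipschitzWith K φ →
        Function.support φ ⊆ ball X (4 * infDist X (frontier Ω)) →
        (∀ᵐ Z, ‖fderiv ℝ φ Z‖ ≤ C₁ / infDist X (frontier Ω) +
          C₁ * 2 ^ i *
            Set.indicator {W | (2 : ℝ) ^ (-(i : ℤ) - 1) ≤ infDist W (frontier Ω) ∧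
              infDist W (frontier Ω) ≤ (2 : ℝ) ^ (-(i : ℤ))} (fun _ => (1 : ℝ)) Z) →
        ∀ y ∈ frontier Ω,
          ∫⁻ Z in {Z | dist Z y ≤ 8 * infDist Z (frontier Ω)},
            ENNReal.ofReal (infDist Z (frontier Ω) ^ ((2 : ℝ) - n) * ‖fderiv ℝ φ Z‖ ^ 2) ≤
            ENNReal.ofReal C := by
  classical
  set V : ℝ≥0∞ := volume (ball (0:EuclideanSpace ℝ (Fin n)) 1) with hV_def
  set Vr : ℝ := V.toReal with hVr_def
  have hVr0 : 0 ≤ Vr := ENNReal.toReal_nonneg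
  have hVfin : V ≠ ⊤ := measure_ball_lt_top.ne
  have h16 : (0:ℝ) < 16^n := by positivity
  refine ⟨100 * C₁^2 * 16^n * (Vr + 1),
    mul_pos (by positivity) (by linarith : (0:ℝ) < Vr + 1), ?_⟩
  intro Ω hΩ hfr X hX i φ K hK hsupp hgrad y hy
  set F := frontier Ω with hF_def
  have hFc : IsClosed F := isClosed_frontier
  have hXF : X ∉ F := fun h => h.2 (by rwa [hΩ.interior_eq])
  have hdX : 0 < infDist X F := (hFc.notMem_iff_infDist_pos hfr).mp hXF
  set dX := infDist X F with hdX_def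
  set Γ : Set (EuclideanSpace ℝ (Fin n)) := {Z | dist Z y ≤ 8 * infDist Z F} with hΓ_def
  have hΓm : MeasurableSet Γ := by
    have : IsClosed Γ := isClosed_le (continuous_id.dist continuous_const)
      (continuous_const.mul (continuous_infDist_pt F))
    exact this.measurableSet
  set L : Set (EuclideanSpace ℝ (Fin n)) := {W | (2 : ℝ) ^ (-(i : ℤ) - 1) ≤ infDist W F ∧
      infDist W F ≤ (2 : ℝ) ^ (-(i : ℤ))} with hL_def
  have hLm : MeasurableSet L := by
    have : L = (fun W => infDist W F) ⁻¹' (Set.Icc ((2:ℝ) ^ (-(i:ℤ)-1)) ((2:ℝ) ^ (-(i:ℤ)))) := rfl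
    rw [this]
    exact (continuous_infDist_pt F).measurable measurableSet_Icc
  set cB : Set (EuclideanSpace ℝ (Fin n)) := closedBall X (4*dX) with hcB_def
  -- fderiv vanishes outside cB
  have hfd0 : ∀ Z, Z ∉ cB → fderiv ℝ φ Z = 0 := by
    intro Z hZ
    have hts : Z ∉ tsupport φ := by
      intro h
      apply hZ
      have h1 : tsupport φ ⊆ cB := by
        refine (closure_mono ?_).trans closure_ball_subset_closedBall
        rw [show (4:ℝ) * dX = 4 * infDist X F from rfl]
        exact hsupp
      exact h1 h
    rw [(notMem_tsupport_iff_eventuallyEq.mp hts).fderiv_eq]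
    exact fderiv_const_apply 0
  set ci : ℝ := ((2:ℝ) ^ (-(i:ℤ)-1)) ^ ((2:ℝ) - n) with hci_def
  have hci0 : 0 ≤ ci := Real.rpow_nonneg (by positivity) _
  set G1 : EuclideanSpace ℝ (Fin n) → ℝ≥0∞ := Set.indicator cB
    (fun W => ENNReal.ofReal (2*(C₁/dX)^2 * infDist W F ^ ((2:ℝ)-n))) with hG1_def
  set G2 : EuclideanSpace ℝ (Fin n) → ℝ≥0∞ := Set.indicator L
    (fun _ => ENNReal.ofReal (2*(C₁*2^i)^2 * ci)) with hG2_def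
  have hexp : (2:ℝ) - n ≤ 0 := by
    have : (2:ℝ) ≤ n := by exact_mod_cast hn
    linarith
  -- pointwise a.e. bound
  have hae : ∀ᵐ Z, ENNReal.ofReal (infDist Z F ^ ((2:ℝ)-n) * ‖fderiv ℝ φ Z‖ ^ 2)
      ≤ G1 Z + G2 Z := by
    filter_upwards [hgrad] with Z hZ
    by_cases hZc : Z ∈ cB
    · have hδnn : 0 ≤ infDist Z F ^ ((2:ℝ)-n) := Real.rpow_nonneg infDist_nonneg _
      by_cases hZL : Z ∈ L
      · have hδ1 : (2:ℝ)^(-(i:ℤ)-1) ≤ infDist Z F := hZL.1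
        have hrle : infDist Z F ^ ((2:ℝ)-n) ≤ ci :=
          Real.rpow_le_rpow_of_nonpos (by positivity) hδ1 hexp
        have hna : ‖fderiv ℝ φ Z‖ ≤ C₁/dX + C₁*2^i := by
          rw [Set.indicator_of_mem hZL] at hZ
          simpa using hZ
        have hreal : infDist Z F ^ ((2:ℝ)-n) * ‖fderiv ℝ φ Z‖^2
            ≤ 2*(C₁/dX)^2 * infDist Z F ^ ((2:ℝ)-n) + 2*(C₁*2^i)^2 * ci := by
          have h1 : ‖fderiv ℝ φ Z‖^2 ≤ (C₁/dX + C₁*2^i)^2 :=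
            pow_le_pow_left₀ (norm_nonneg _) hna 2
          nlinarith [mul_le_mul_of_nonneg_left h1 hδnn,
            mul_nonneg hδnn (sq_nonneg (C₁/dX - C₁*2^i)),
            mul_le_mul_of_nonneg_left hrle (show (0:ℝ) ≤ 2*(C₁*2^i)^2 by positivity)]
        calc ENNReal.ofReal (infDist Z F ^ ((2:ℝ)-n) * ‖fderiv ℝ φ Z‖ ^ 2)
            ≤ ENNReal.ofReal (2*(C₁/dX)^2 * infDist Z F ^ ((2:ℝ)-n) + 2*(C₁*2^i)^2 * ci) :=
              ENNReal.ofReal_le_ofReal hreal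
          _ ≤ ENNReal.ofReal (2*(C₁/dX)^2 * infDist Z F ^ ((2:ℝ)-n))
              + ENNReal.ofReal (2*(C₁*2^i)^2 * ci) := ENNReal.ofReal_add_le
          _ = G1 Z + G2 Z := by
              rw [hG1_def, hG2_def, Set.indicator_of_mem hZc, Set.indicator_of_mem hZL]
      · have hna : ‖fderiv ℝ φ Z‖ ≤ C₁/dX := by
          rw [Set.indicator_of_notMem hZL] at hZ
          simpa using hZ
        have hreal : infDist Z F ^ ((2:ℝ)-n) * ‖fderiv ℝ φ Z‖^2
            ≤ 2*(C₁/dX)^2 * infDist Z F ^ ((2:ℝ)-n) := by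
          have h1 : ‖fderiv ℝ φ Z‖^2 ≤ (C₁/dX)^2 := pow_le_pow_left₀ (norm_nonneg _) hna 2
          nlinarith [mul_le_mul_of_nonneg_left h1 hδnn, sq_nonneg (C₁/dX)]
        calc ENNReal.ofReal (infDist Z F ^ ((2:ℝ)-n) * ‖fderiv ℝ φ Z‖ ^ 2)
            ≤ G1 Z := by
              rw [hG1_def, Set.indicator_of_mem hZc]
              exact ENNReal.ofReal_le_ofReal hreal
          _ ≤ G1 Z + G2 Z := le_self_add
    · rw [hfd0 Z hZc]
      simp
  have hG1m : Measurable G1 := by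
    apply Measurable.indicator _ measurableSet_closedBall
    apply Measurable.ennreal_ofReal
    exact measurable_const.mul (((continuous_infDist_pt F).measurable).pow measurable_const)
  -- piece 2 bound
  have hI2 : ∫⁻ Z in Γ, G2 Z ≤ ENNReal.ofReal (C₁^2*16^n) * V := by
    have hstep : ∫⁻ Z in Γ, G2 Z
        = ENNReal.ofReal (2*(C₁*2^i)^2 * ci) * volume (L ∩ Γ) := by
      rw [hG2_def, lintegral_indicator hLm, setLIntegral_const, Measure.restrict_apply hLm]
    rw [hstep]
    have hsub2 : L ∩ Γ ⊆ closedBall y (8 * (2:ℝ)^(-(i:ℤ))) := by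
      rintro Z ⟨hZL, hZΓ⟩
      rw [mem_closedBall]
      calc dist Z y ≤ 8 * infDist Z F := hZΓ
        _ ≤ 8 * (2:ℝ)^(-(i:ℤ)) := by linarith [hZL.2]
    calc ENNReal.ofReal (2*(C₁*2^i)^2 * ci) * volume (L ∩ Γ)
        ≤ ENNReal.ofReal (2*(C₁*2^i)^2 * ci) * volume (closedBall y (8 * (2:ℝ)^(-(i:ℤ)))) :=
          mul_le_mul_right (measure_mono hsub2) _
      _ = ENNReal.ofReal (2*(C₁*2^i)^2 * ci)
          * (ENNReal.ofReal ((8 * (2:ℝ)^(-(i:ℤ)))^n) * V) := by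
          rw [Measure.addHaar_closedBall _ _ (by positivity), finrank_euclideanSpace_fin]
      _ = ENNReal.ofReal (2*(C₁*2^i)^2 * ci * (8 * (2:ℝ)^(-(i:ℤ)))^n) * V := by
          rw [ENNReal.ofReal_mul (show (0:ℝ) ≤ 2*(C₁*2^i)^2 * ci by positivity),
            ENNReal.ofReal_mul (show (0:ℝ) ≤ 2*(C₁*2^i)^2 by positivity)]
          ring
      _ ≤ ENNReal.ofReal (C₁^2*16^n) * V := by
          apply mul_le_mul_left
          exact ENNReal.ofReal_le_ofReal (aux2 n C₁ i hC₁)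
  -- piece 1 bound
  set S : ℕ → Set (EuclideanSpace ℝ (Fin n)) := fun k =>
    {Z | (8*dX)/2^(k+1) < infDist Z F ∧ infDist Z F ≤ (8*dX)/2^k} ∩ Γ with hS_def
  have hSm : ∀ k, MeasurableSet (S k) := by
    intro k
    apply MeasurableSet.inter _ hΓm
    have : {Z : EuclideanSpace ℝ (Fin n) | (8*dX)/2^(k+1) < infDist Z F ∧ infDist Z F ≤ (8*dX)/2^k}
        = (fun Z => infDist Z F) ⁻¹' (Set.Ioc ((8*dX)/2^(k+1)) ((8*dX)/2^k)) := rfl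
    rw [this]
    exact (continuous_infDist_pt F).measurable measurableSet_Ioc
  have hy0 : volume ({y} : Set (EuclideanSpace ℝ (Fin n))) = 0 := by
    have hsub : ({y} : Set (EuclideanSpace ℝ (Fin n))) ⊆ closedBall y 0 := by
      intro z hz; rw [Set.mem_singleton_iff] at hz; simp [hz]
    refine le_antisymm (le_trans (measure_mono hsub) ?_) bot_le
    rw [Measure.addHaar_closedBall _ _ le_rfl, finrank_euclideanSpace_fin,
      zero_pow (by omega : n ≠ 0)]
    simp
  have h12 : ENNReal.ofReal (1/2:ℝ) = 2⁻¹ := by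
    rw [show (1/2:ℝ) = 2⁻¹ by norm_num, ENNReal.ofReal_inv_of_pos (by norm_num)]
    norm_num
  have hterm : ∀ k : ℕ, ∫⁻ Z in S k,
      ENNReal.ofReal (2*(C₁/dX)^2 * infDist Z F ^ ((2:ℝ)-n))
      ≤ (ENNReal.ofReal (32*C₁^2*16^n) * V) * (2⁻¹)^k := by
    intro k
    have hu : (0:ℝ) < (8*dX)/2^(k+1) := by positivity
    calc ∫⁻ Z in S k, ENNReal.ofReal (2*(C₁/dX)^2 * infDist Z F ^ ((2:ℝ)-n))
        ≤ ∫⁻ _ in S k,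
            ENNReal.ofReal (2*(C₁/dX)^2 * ((8*dX)/2^(k+1)) ^ ((2:ℝ)-n)) := by
          apply setLIntegral_mono' (hSm k)
          intro Z hZ
          apply ENNReal.ofReal_le_ofReal
          apply mul_le_mul_of_nonneg_left _ (by positivity)
          exact Real.rpow_le_rpow_of_nonpos hu hZ.1.1.le hexp
      _ = ENNReal.ofReal (2*(C₁/dX)^2 * ((8*dX)/2^(k+1)) ^ ((2:ℝ)-n)) * volume (S k) :=
          setLIntegral_const _ _
      _ ≤ ENNReal.ofReal (2*(C₁/dX)^2 * ((8*dX)/2^(k+1)) ^ ((2:ℝ)-n))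
          * (ENNReal.ofReal ((8*((8*dX)/2^k))^n) * V) := by
          apply mul_le_mul_right
          have hsubk : S k ⊆ closedBall y (8*((8*dX)/2^k)) := by
            rintro Z ⟨hZ1, hZΓ⟩
            rw [mem_closedBall]
            calc dist Z y ≤ 8 * infDist Z F := hZΓ
              _ ≤ 8*((8*dX)/2^k) := by linarith [hZ1.2]
          calc volume (S k) ≤ volume (closedBall y (8*((8*dX)/2^k))) := measure_mono hsubk
            _ = ENNReal.ofReal ((8*((8*dX)/2^k))^n) * V := by
              rw [Measure.addHaar_closedBall _ _ (by positivity), finrank_euclideanSpace_fin]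
      _ = ENNReal.ofReal (2*(C₁/dX)^2 * ((8*dX)/2^(k+1)) ^ ((2:ℝ)-n) * (8*((8*dX)/2^k))^n)
          * V := by
          rw [ENNReal.ofReal_mul
              (show (0:ℝ) ≤ 2*(C₁/dX)^2 * ((8*dX)/2^(k+1)) ^ ((2:ℝ)-n) by positivity),
            ENNReal.ofReal_mul (show (0:ℝ) ≤ 2*(C₁/dX)^2 by positivity)]
          ring
      _ ≤ ENNReal.ofReal (32*C₁^2*16^n*(1/2)^k) * V := by
          apply mul_le_mul_left
          exact ENNReal.ofReal_le_ofReal (aux1 n k C₁ dX hC₁ hdX)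
      _ = (ENNReal.ofReal (32*C₁^2*16^n) * V) * (2⁻¹)^k := by
          rw [ENNReal.ofReal_mul (by positivity), ENNReal.ofReal_pow (by norm_num), h12]
          ring
  have hI1 : ∫⁻ Z in Γ, G1 Z ≤ ENNReal.ofReal (64*C₁^2*16^n) * V := by
    have hstep : ∫⁻ Z in Γ, G1 Z
        = ∫⁻ Z in cB ∩ Γ, ENNReal.ofReal (2*(C₁/dX)^2 * infDist Z F ^ ((2:ℝ)-n)) := by
      rw [hG1_def, lintegral_indicator measurableSet_closedBall,
        Measure.restrict_restrict measurableSet_closedBall]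
    rw [hstep]
    have hsub1 : cB ∩ Γ ⊆ {y} ∪ ⋃ k, S k := by
      rintro Z ⟨hZc, hZΓ⟩
      rcases eq_or_lt_of_le (infDist_nonneg : 0 ≤ infDist Z F) with h0 | hpos
      · left
        have hd : dist Z y ≤ 0 := by
          have := hZΓ
          rw [hΓ_def] at this
          simp only [Set.mem_setOf_eq] at this
          rw [← h0] at this
          linarith
        rw [Set.mem_singleton_iff]
        exact dist_le_zero.mp hd
      · right
        have hZX : dist Z X ≤ 4*dX := mem_closedBall.mp hZc
        have hd5 : infDist Z F ≤ 8*dX := by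
          have h1 : infDist Z F ≤ infDist X F + dist Z X := infDist_le_infDist_add_dist
          rw [← hdX_def] at h1
          linarith
        obtain ⟨k, hk1, hk2⟩ := aux_dyadic (8*dX) (infDist Z F) hpos hd5
        exact Set.mem_iUnion.mpr ⟨k, ⟨⟨hk1, hk2⟩, hZΓ⟩⟩
    calc ∫⁻ Z in cB ∩ Γ, ENNReal.ofReal (2*(C₁/dX)^2 * infDist Z F ^ ((2:ℝ)-n))
        ≤ ∫⁻ Z in ({y} ∪ ⋃ k, S k),
            ENNReal.ofReal (2*(C₁/dX)^2 * infDist Z F ^ ((2:ℝ)-n)) :=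
          lintegral_mono_set hsub1
      _ ≤ (∫⁻ Z in ({y} : Set (EuclideanSpace ℝ (Fin n))),
            ENNReal.ofReal (2*(C₁/dX)^2 * infDist Z F ^ ((2:ℝ)-n)))
          + ∫⁻ Z in (⋃ k, S k),
            ENNReal.ofReal (2*(C₁/dX)^2 * infDist Z F ^ ((2:ℝ)-n)) :=
          lintegral_union_le _ _ _
      _ ≤ 0 + ∑' k, ∫⁻ Z in S k,
            ENNReal.ofReal (2*(C₁/dX)^2 * infDist Z F ^ ((2:ℝ)-n)) := by
          apply add_le_add
          · rw [setLIntegral_measure_zero _ _ hy0]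
          · exact lintegral_iUnion_le _ _
      _ ≤ 0 + ∑' k : ℕ, (ENNReal.ofReal (32*C₁^2*16^n) * V) * (2⁻¹)^k := by
          apply add_le_add_right
          exact ENNReal.tsum_le_tsum hterm
      _ = (ENNReal.ofReal (32*C₁^2*16^n) * V) * 2 := by
          rw [zero_add, ENNReal.tsum_mul_left, ENNReal.tsum_geometric,
            ENNReal.one_sub_inv_two, inv_inv]
      _ = ENNReal.ofReal (64*C₁^2*16^n) * V := by
          rw [show (64:ℝ)*C₁^2*16^n = 2*(32*C₁^2*16^n) by ring,
            ENNReal.ofReal_mul (show (0:ℝ) ≤ 2 by norm_num), ENNReal.ofReal_ofNat]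
          ring
  -- assemble
  calc ∫⁻ Z in Γ, ENNReal.ofReal (infDist Z F ^ ((2:ℝ)-n) * ‖fderiv ℝ φ Z‖ ^ 2)
      ≤ ∫⁻ Z in Γ, (G1 Z + G2 Z) := lintegral_mono_ae (ae_restrict_of_ae hae)
    _ = (∫⁻ Z in Γ, G1 Z) + ∫⁻ Z in Γ, G2 Z := lintegral_add_left hG1m _
    _ ≤ ENNReal.ofReal (64*C₁^2*16^n) * V + ENNReal.ofReal (C₁^2*16^n) * V :=
        add_le_add hI1 hI2
    _ = ENNReal.ofReal (64*C₁^2*16^n + C₁^2*16^n) * V := by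
        rw [← add_mul, ← ENNReal.ofReal_add (by positivity) (by positivity)]
    _ ≤ ENNReal.ofReal (100 * C₁^2 * 16^n * (Vr + 1)) := by
        rw [← ENNReal.ofReal_toReal hVfin, ← ENNReal.ofReal_mul (by positivity)]
        apply ENNReal.ofReal_le_ofReal
        have h1 : (0:ℝ) ≤ C₁^2*16^n*V.toReal :=
          mul_nonneg (mul_nonneg (sq_nonneg C₁) h16.le) ENNReal.toReal_nonneg
        have h2 : (0:ℝ) ≤ C₁^2*16^n := mul_nonneg (sq_nonneg C₁) h16.le
        have h3 : Vr = V.toReal := rfl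
        nlinarith [h1, h2]
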